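/- For a nondiscriminating SB σ, a path x is conservatively dominated at G⁰ if and only if there exist a nonempty coalition C ⊆ N, a period τ ≥ 1, and ζ^C_τ ∈ Z^C such that, with z(j|σ) ∈ argmin{U_j : σ(G⁰)} (assumed to exist), U_j(x; ζ^C_τ; z(j|σ)) > U_j(x) for all j ∈ C. -/

import Mathlib

open Set

section Setup

variable {N : Type*} [Fintype N] [DecidableEq N] {Z : N → Type*}

/-- A stage-game action profile. -/
abbrev Profile (Z : N → Type*) := ∀ i, Z i

/-- An infinite path of action profiles. -/
abbrev RPath (Z : N → Type*) := ℕ → Profile Z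

/-- The profile played in period `τ` when coalition `C` deviates to `ζ` (off `C`, players follow `x τ`). -/
def devProfile (x : RPath Z) (C : Finset N) (τ : ℕ) (ζ : Profile Z) : Profile Z :=
  fun i => if i ∈ C then ζ i else x τ i

/-- The spliced path `(x; ζ^C_τ; y)`: follow `x` before period `τ`, play the deviation profile at `τ`,
and follow `y` afterwards.  Periods are indexed from `0`. -/
def splice (x : RPath Z) (C : Finset N) (τ : ℕ) (ζ : Profile Z) (y : RPath Z) : RPath Z :=
  fun t => if t < τ then x t else if t = τ then devProfile x C τ ζ else y (t - τ - 1)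

/-- Discounted payoff `U_i(x) = (1-δ) ∑ δ^t u_i(x_t)`. -/
noncomputable def disc (u : N → Profile Z → ℝ) (δ : ℝ) (i : N) (x : RPath Z) : ℝ :=
  (1 - δ) * ∑' t : ℕ, δ ^ t * u i (x t)

/-- The coalitional enforceability operator `Ψ`. -/
def Psi (u : N → Profile Z → ℝ) (δ : ℝ) (Y : Set (RPath Z)) : Set (RPath Z) :=
  {x | ∀ C : Finset N, C.Nonempty → ∀ τ : ℕ, ∀ ζ : Profile Z,
    ∃ p : N → RPath Z, (∀ i, p i ∈ Y) ∧
      ∃ i ∈ C, disc u δ i x ≥ disc u δ i (splice x C τ ζ (p i))}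

/-- A history (position) is a finite list of past action profiles. -/
abbrev Hist (Z : N → Type*) := List (Profile Z)

/-- The history reached after `n` periods of following plan `f` from history `h`. -/
def planHist (f : Hist Z → Profile Z) (h : Hist Z) : ℕ → Hist Z
  | 0 => h
  | n + 1 => planHist f h n ++ [f (planHist f h n)]

/-- The continuation path prescribed by plan `f` after history `h`. -/
def planPath (f : Hist Z → Profile Z) (h : Hist Z) : RPath Z :=
  fun n => f (planHist f h n)

/-- The position induced from `G` when coalition `C` deviates from path `x` in period `τ` via `ζ`. -/
def devHistory (G : Hist Z) (x : RPath Z) (C : Finset N) (τ : ℕ) (ζ : Profile Z) : Hist Z :=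
  G ++ (List.ofFn fun t : Fin τ => x t) ++ [devProfile x C τ ζ]

/-- A Perfect Coalitional Equilibrium: after every history, every one-shot coalitional deviation
leaves some member of the deviating coalition no better off, given the plan's continuation. -/
def IsPCE (u : N → Profile Z → ℝ) (δ : ℝ) (f : Hist Z → Profile Z) : Prop :=
  ∀ h : Hist Z, ∀ C : Finset N, C.Nonempty → ∀ τ : ℕ, ∀ ζ : Profile Z,
    ∃ i ∈ C, disc u δ i (planPath f h) ≥
      disc u δ i (splice (planPath f h) C τ ζ (planPath f (devHistory h (planPath f h) C τ ζ)))

/-- The set of Perfect Coalitional Equilibrium paths. -/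
def PCEP (u : N → Profile Z → ℝ) (δ : ℝ) : Set (RPath Z) :=
  {x | ∃ f : Hist Z → Profile Z, IsPCE u δ f ∧ planPath f [] = x}

/-- Payoff at position `G`: `u_i(G)(x) = a_i(G) + δ^{|G|} U_i(x)`. -/
noncomputable def posPayoff (u : N → Profile Z → ℝ) (δ : ℝ) (i : N) (G : Hist Z)
    (x : RPath Z) : ℝ :=
  (1 - δ) * (∑ t : Fin G.length, δ ^ (t : ℕ) * u i (G.get t)) + δ ^ G.length * disc u δ i x

/-- The conservative dominion of position `G` relative to the standard of behavior `σ`. -/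
def CDOM (u : N → Profile Z → ℝ) (δ : ℝ) (σ : Hist Z → Set (RPath Z)) (G : Hist Z) :
    Set (RPath Z) :=
  {x | ∃ C : Finset N, C.Nonempty ∧ ∃ τ : ℕ, ∃ ζ : Profile Z,
    (σ (devHistory G x C τ ζ)).Nonempty ∧
    ∀ y ∈ σ (devHistory G x C τ ζ), ∀ i ∈ C,
      posPayoff u δ i (devHistory G x C τ ζ) y > posPayoff u δ i G x}

/-- A standard of behavior is nondiscriminating if it assigns the same set to every position. -/
def Nondiscriminating (σ : Hist Z → Set (RPath Z)) : Prop := ∀ G H, σ G = σ H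

/-- Conservative internal stability. -/
def ConsInternallyStable (u : N → Profile Z → ℝ) (δ : ℝ) (σ : Hist Z → Set (RPath Z)) : Prop :=
  ∀ G, σ G ∩ CDOM u δ σ G = ∅

/-- Conservative external stability. -/
def ConsExternallyStable (u : N → Profile Z → ℝ) (δ : ℝ) (σ : Hist Z → Set (RPath Z)) : Prop :=
  ∀ G, (σ G)ᶜ ⊆ CDOM u δ σ G

end Setup


set_option maxHeartbeats 1000000

section Aux
variable {N : Type*} [Fintype N] [DecidableEq N] {Z : N → Type*}
  [∀ i, MetricSpace (Z i)] [∀ i, CompactSpace (Z i)] [∀ i, Nonempty (Z i)]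
  (u : N → Profile Z → ℝ) (δ : ℝ)

set_option linter.unusedSectionVars false

theorem summable_aux (hu : ∀ i, Continuous (u i)) (i : N)
    (hδ0 : 0 < δ) (hδ1 : δ < 1) (w : RPath Z) :
    Summable (fun t : ℕ => δ ^ t * u i (w t)) := by
  obtain ⟨M, hM⟩ := (isCompact_range ((hu i).abs)).bddAbove
  apply Summable.of_abs
  refine Summable.of_nonneg_of_le (fun t => abs_nonneg _) (fun t => ?_)
    ((summable_geometric_of_lt_one hδ0.le hδ1).mul_left M)
  rw [abs_mul, abs_pow, abs_of_pos hδ0, mul_comm]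
  exact mul_le_mul_of_nonneg_right (hM ⟨w t, rfl⟩) (pow_nonneg hδ0.le t)

theorem disc_splice (hu : ∀ i, Continuous (u i)) (hδ0 : 0 < δ) (hδ1 : δ < 1) (i : N)
    (x : RPath Z) (C : Finset N) (τ : ℕ) (ζ : Profile Z) (y : RPath Z) :
    disc u δ i (splice x C τ ζ y) =
      (1 - δ) * ((∑ t ∈ Finset.range τ, δ ^ t * u i (x t))
        + δ ^ τ * u i (devProfile x C τ ζ)) + δ ^ (τ + 1) * disc u δ i y := by
  have hs := summable_aux u δ hu i hδ0 hδ1 (splice x C τ ζ y)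
  have hsplit := hs.sum_add_tsum_nat_add (τ + 1)
  have htail : ∀ t : ℕ, δ ^ (t + (τ + 1)) * u i (splice x C τ ζ y (t + (τ + 1)))
      = δ ^ (τ + 1) * (δ ^ t * u i (y t)) := by
    intro t
    have h1 : ¬ (t + (τ + 1) < τ) := by omega
    have h2 : ¬ (t + (τ + 1) = τ) := by omega
    have h3 : t + (τ + 1) - τ - 1 = t := by omega
    simp only [splice, h1, h2, h3, if_false]
    ring
  have hhead : ∑ t ∈ Finset.range (τ + 1), δ ^ t * u i (splice x C τ ζ y t)
      = (∑ t ∈ Finset.range τ, δ ^ t * u i (x t)) + δ ^ τ * u i (devProfile x C τ ζ) := by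
    rw [Finset.sum_range_succ]
    congr 1
    · refine Finset.sum_congr rfl fun t ht => ?_
      have : t < τ := Finset.mem_range.mp ht
      simp [splice, this]
    · simp [splice]
  rw [disc, ← hsplit, hhead]
  simp only [htail]
  rw [tsum_mul_left, disc]
  ring

theorem posPayoff_nil (i : N) (x : RPath Z) :
    posPayoff u δ i ([] : Hist Z) x = disc u δ i x := by
  simp [posPayoff]

theorem posPayoff_devHistory_nil (i : N) (x : RPath Z) (C : Finset N) (τ : ℕ) (ζ : Profile Z)
    (y : RPath Z) :
    posPayoff u δ i (devHistory ([] : Hist Z) x C τ ζ) y =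
      (1 - δ) * ((∑ t ∈ Finset.range τ, δ ^ t * u i (x t))
        + δ ^ τ * u i (devProfile x C τ ζ)) + δ ^ (τ + 1) * disc u δ i y := by
  have hlen : (devHistory ([] : Hist Z) x C τ ζ).length = τ + 1 := by
    simp [devHistory]
  rw [posPayoff]
  congr 1
  · congr 1
    rw [← Fin.sum_congr' _ hlen.symm]
    rw [Fin.sum_univ_castSucc]
    congr 1
    · rw [← Fin.sum_univ_eq_sum_range]
      refine Finset.sum_congr rfl fun t _ => ?_
      congr 1
      simp [devHistory, List.get_eq_getElem, List.getElem_append, t.isLt]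
      split
      · rfl
      · rename_i h; exact absurd t.isLt h
    · congr 1
      simp [devHistory, List.get_eq_getElem, List.getElem_append]
      split
      · exact absurd ‹_› (lt_irrefl τ)
      · rfl
  · rw [hlen]

theorem posPayoff_devHistory_nil_eq_disc_splice (hu : ∀ i, Continuous (u i))
    (hδ0 : 0 < δ) (hδ1 : δ < 1) (i : N)
    (x : RPath Z) (C : Finset N) (τ : ℕ) (ζ : Profile Z) (y : RPath Z) :
    posPayoff u δ i (devHistory ([] : Hist Z) x C τ ζ) y = disc u δ i (splice x C τ ζ y) := by
  rw [posPayoff_devHistory_nil, disc_splice u δ hu hδ0 hδ1]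

end Aux

theorem cdom_positive_characterization {N : Type*} [Fintype N] [DecidableEq N] {Z : N → Type*}
    [∀ i, MetricSpace (Z i)] [∀ i, CompactSpace (Z i)] [∀ i, Nonempty (Z i)]
    (u : N → Profile Z → ℝ) (δ : ℝ)
    (hu : ∀ i, Continuous (u i)) (hδ0 : 0 < δ) (hδ1 : δ < 1)
    (σ : Hist Z → Set (RPath Z)) (hnd : Nondiscriminating σ)
    (hne : (σ ([] : Hist Z)).Nonempty)
    (z : N → RPath Z)
    (hz : ∀ i, z i ∈ σ ([] : Hist Z) ∧
      ∀ x ∈ σ ([] : Hist Z), disc u δ i (z i) ≤ disc u δ i x)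
    (x : RPath Z) :
    x ∈ CDOM u δ σ ([] : Hist Z) ↔
      ∃ C : Finset N, C.Nonempty ∧ ∃ τ : ℕ, ∃ ζ : Profile Z,
        ∀ j ∈ C, disc u δ j (splice x C τ ζ (z j)) > disc u δ j x := by
  constructor
  · rintro ⟨C, hC, τ, ζ, -, hdom⟩
    refine ⟨C, hC, τ, ζ, fun j hj => ?_⟩
    have hzmem : z j ∈ σ (devHistory ([] : Hist Z) x C τ ζ) := by
      rw [hnd _ ([] : Hist Z)]; exact (hz j).1
    have := hdom (z j) hzmem j hj
    rwa [posPayoff_devHistory_nil_eq_disc_splice u δ hu hδ0 hδ1, posPayoff_nil] at this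
  · rintro ⟨C, hC, τ, ζ, hstrict⟩
    refine ⟨C, hC, τ, ζ, ?_, ?_⟩
    · rw [hnd _ ([] : Hist Z)]; exact hne
    · intro y hy i hi
      rw [hnd _ ([] : Hist Z)] at hy
      rw [posPayoff_devHistory_nil_eq_disc_splice u δ hu hδ0 hδ1, posPayoff_nil]
      have h1 : disc u δ i (splice x C τ ζ (z i)) ≤ disc u δ i (splice x C τ ζ y) := by
        rw [disc_splice u δ hu hδ0 hδ1, disc_splice u δ hu hδ0 hδ1]
        have := (hz i).2 y hy
        have hpow : (0:ℝ) < δ ^ (τ + 1) := pow_pos hδ0 _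
        nlinarith
      exact lt_of_lt_of_le (hstrict i hi) h1
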